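/- Let K be a field of characteristic 0, n ≥ 1, and P = K[p₁,…,pₙ,q₁,…,qₙ,t]. Define derivations Y_{pᵢ} = ∂_{pᵢ} + qᵢ∂_t and Y_{qᵢ} = ∂_{qᵢ} − pᵢ∂_t of P. Suppose f ∈ P satisfies: Y_{pᵢ}Y_{pⱼ}(f) = 0 and Y_{qᵢ}Y_{qⱼ}(f) = 0 for all i, j; Y_{pᵢ}Y_{qⱼ}(f) = 0 for all i ≠ j; and (Y_{pᵢ}Y_{qᵢ} + Y_{qᵢ}Y_{pᵢ})(f) = 0 for all i. Then f lies in the K-linear span of {1, p₁,…,pₙ, q₁,…,qₙ, t}. (Consequently, the partial prolong of the negative part of the contact algebra together with the one-dimensional subalgebra K·K_t of its zeroth component adds no new positive components.) -/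

import Mathlib

set_option linter.unusedSectionVars false


open MvPolynomial

noncomputable section

/-- Index type for the variables `p₁,…,pₙ,q₁,…,qₙ,t`. -/
abbrev CIdx (n : ℕ) := Fin n ⊕ (Fin n ⊕ Unit)

/-- The polynomial ring `K[p₁,…,pₙ,q₁,…,qₙ,t]`. -/
abbrev PC (K : Type*) [Field K] (n : ℕ) := MvPolynomial (CIdx n) K

/-- Polynomial vector fields: derivations of `K[p₁,…,pₙ,qₙ,…,qₙ,t]`. -/
abbrev DerC (K : Type*) [Field K] (n : ℕ) := Derivation K (PC K n) (PC K n)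

variable (K : Type*) [Field K] [CharZero K] (n : ℕ)

/-- The variable `pᵢ`. -/
def pV (i : Fin n) : PC K n := X (Sum.inl i)
/-- The variable `qᵢ`. -/
def qV (i : Fin n) : PC K n := X (Sum.inr (Sum.inl i))
/-- The variable `t`. -/
def tV : PC K n := X (Sum.inr (Sum.inr ()))

/-- `∂_{pᵢ}`. -/
def dp (i : Fin n) : DerC K n := pderiv (Sum.inl i)
/-- `∂_{qᵢ}`. -/
def dq (i : Fin n) : DerC K n := pderiv (Sum.inr (Sum.inl i))
/-- `∂_t`. -/
def dt : DerC K n := pderiv (Sum.inr (Sum.inr ()))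

/-- `Y_{pᵢ} = ∂_{pᵢ} + qᵢ∂_t`. -/
def Yp (i : Fin n) : DerC K n := dp K n i + qV K n i • dt K n
/-- `Y_{qᵢ} = ∂_{qᵢ} − pᵢ∂_t`. -/
def Yq (i : Fin n) : DerC K n := dq K n i - pV K n i • dt K n


-- ===== auxiliary lemmas =====

lemma my_coeff_pderiv {σ : Type*} [DecidableEq σ] (i : σ) (f : MvPolynomial σ K)
    (m : σ →₀ ℕ) :
    coeff m (pderiv i f) = (m i + 1 : ℕ) * coeff (m + Finsupp.single i 1) f := by
  induction f using MvPolynomial.induction_on' with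
  | add p q hp hq => simp [hp, hq, mul_add]
  | monomial s a =>
    rw [pderiv_monomial, coeff_monomial, coeff_monomial]
    split_ifs with h1 h2 h2
    · subst h2
      have : ((m + Finsupp.single i 1 : σ →₀ ℕ)) i = m i + 1 := by simp
      rw [this]; push_cast; ring
    · rcases Nat.eq_zero_or_pos (s i) with h0 | h0
      · simp [h0]
      · exfalso; apply h2
        have hle : Finsupp.single i 1 ≤ s := by
          rw [Finsupp.single_le_iff]; omega
        rw [← h1, tsub_add_cancel_of_le hle]
    · exfalso; apply h1; subst h2; exact add_tsub_cancel_right m (Finsupp.single i 1)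
    · simp

lemma my_pderiv_comm {σ : Type*} [DecidableEq σ] (i j : σ) (f : MvPolynomial σ K) :
    pderiv i (pderiv j f) = pderiv j (pderiv i f) := by
  apply MvPolynomial.ext
  intro m
  rw [my_coeff_pderiv, my_coeff_pderiv, my_coeff_pderiv, my_coeff_pderiv]
  rcases eq_or_ne i j with rfl | hij
  · rfl
  · have h1 : ((m + Finsupp.single i 1 : σ →₀ ℕ)) j = m j := by
      simp [Finsupp.single_apply, hij]
    have h2 : ((m + Finsupp.single j 1 : σ →₀ ℕ)) i = m i := by
      simp [Finsupp.single_apply, hij.symm]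
    rw [h1, h2, show m + Finsupp.single i 1 + Finsupp.single j 1
        = m + Finsupp.single j 1 + Finsupp.single i 1 by abel]
    push_cast; ring

lemma eq_C_of_all_pderiv {σ : Type*} [DecidableEq σ] (g : MvPolynomial σ K)
    (h : ∀ i, pderiv i g = 0) : g = C (coeff 0 g) := by
  apply MvPolynomial.ext
  intro m
  rcases eq_or_ne m 0 with rfl | hm
  · simp
  · obtain ⟨i, hi⟩ : ∃ i, m i ≠ 0 := by
      by_contra hc
      push_neg at hc
      exact hm (Finsupp.ext fun a => hc a)
    have h1 : (1 : ℕ) ≤ m i := Nat.one_le_iff_ne_zero.2 hi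
    have key : coeff (m - Finsupp.single i 1) (pderiv i g) = 0 := by rw [h i]; rfl
    rw [my_coeff_pderiv] at key
    have hle : Finsupp.single i 1 ≤ m := Finsupp.single_le_iff.2 h1
    rw [tsub_add_cancel_of_le hle] at key
    have h2 : ((m - Finsupp.single i 1 : σ →₀ ℕ)) i + 1 = m i := by
      rw [Finsupp.tsub_apply, Finsupp.single_apply, if_pos rfl]; omega
    rw [h2] at key
    have hne : (m i : K) ≠ 0 := Nat.cast_ne_zero.2 hi
    rw [coeff_C, if_neg (Ne.symm hm)]
    exact (mul_eq_zero.1 key).resolve_left hne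

lemma mem_span_of_second_pderiv {σ : Type*} [Fintype σ] [DecidableEq σ]
    (h : MvPolynomial σ K) (H : ∀ i j : σ, pderiv i (pderiv j h) = 0) :
    h ∈ Submodule.span K ({1} ∪ Set.range X : Set (MvPolynomial σ K)) := by
  have hc : ∀ j, pderiv j h = C (coeff 0 (pderiv j h)) :=
    fun j => eq_C_of_all_pderiv K _ fun i => H i j
  set c : σ → K := fun j => coeff 0 (pderiv j h) with hcdef
  have hz : ∀ i, pderiv i (h - ∑ j : σ, C (c j) * X j) = 0 := by
    intro i
    rw [map_sub, map_sum, hc i]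
    have he : ∀ j : σ, pderiv i (C (c j) * X j) = if j = i then C (c j) else 0 := by
      intro j
      rw [pderiv_C_mul]
      rcases eq_or_ne j i with rfl | hne
      · simp [pderiv_X_self]
      · simp [pderiv_X_of_ne hne, hne]
    rw [Finset.sum_congr rfl fun j _ => he j, Finset.sum_ite_eq' Finset.univ i]
    simp [hcdef]
  have hconst := eq_C_of_all_pderiv K _ hz
  have hrepr : h = C (coeff 0 (h - ∑ j : σ, C (c j) * X j)) + ∑ j : σ, C (c j) * X j := by
    rw [← hconst]; ring
  rw [hrepr]
  apply Submodule.add_mem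
  · have e1 : C (coeff 0 (h - ∑ j : σ, C (c j) * X j)) =
        (coeff 0 (h - ∑ j : σ, C (c j) * X j)) • (1 : MvPolynomial σ K) := by
      rw [smul_eq_C_mul, mul_one]
    rw [e1]
    exact Submodule.smul_mem _ _ (Submodule.subset_span (Or.inl rfl))
  · apply Submodule.sum_mem
    intro j _
    have e2 : C (c j) * X j = (c j) • (X j : MvPolynomial σ K) := by rw [smul_eq_C_mul]
    rw [e2]
    exact Submodule.smul_mem _ _ (Submodule.subset_span (Or.inr ⟨j, rfl⟩))

lemma cancel_nat (m : ℕ) (hm : (m : K) ≠ 0) (x : PC K n)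
    (h : (m : PC K n) * x = 0) : x = 0 := by
  have hC : (m : PC K n) = C (m : K) := by simp
  rw [hC] at h
  rcases mul_eq_zero.1 h with h' | h'
  · exact absurd (by simpa using h') hm
  · exact h'

lemma dX1 (i : Fin n) : pderiv (Sum.inr (Sum.inr ()) : CIdx n) (X (Sum.inl i) : PC K n) = 0 := pderiv_X_of_ne (by simp)
lemma dX2 (i : Fin n) : pderiv (Sum.inr (Sum.inr ()) : CIdx n) (X (Sum.inr (Sum.inl i)) : PC K n) = 0 := pderiv_X_of_ne (by simp)
lemma dX3 (i j : Fin n) : pderiv (Sum.inl i : CIdx n) (X (Sum.inr (Sum.inl j)) : PC K n) = 0 := pderiv_X_of_ne (by simp)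
lemma dX4 (i j : Fin n) : pderiv (Sum.inr (Sum.inl i) : CIdx n) (X (Sum.inl j) : PC K n) = 0 := pderiv_X_of_ne (by simp)
lemma dX5 (i : Fin n) : pderiv (Sum.inl i : CIdx n) (X (Sum.inr (Sum.inr ())) : PC K n) = 0 := pderiv_X_of_ne (by simp)
lemma dX6 (i : Fin n) : pderiv (Sum.inr (Sum.inl i) : CIdx n) (X (Sum.inr (Sum.inr ())) : PC K n) = 0 := pderiv_X_of_ne (by simp)
lemma dX7 (i j : Fin n) (h : i ≠ j) : pderiv (Sum.inl i : CIdx n) (X (Sum.inl j) : PC K n) = 0 := pderiv_X_of_ne (by simp [h.symm])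
lemma dX8 (i j : Fin n) (h : i ≠ j) : pderiv (Sum.inr (Sum.inl i) : CIdx n) (X (Sum.inr (Sum.inl j)) : PC K n) = 0 := pderiv_X_of_ne (by simp [h.symm])

lemma Yp_app (i : Fin n) (g : PC K n) :
    Yp K n i g = dp K n i g + qV K n i * dt K n g := rfl

lemma Yq_app (i : Fin n) (g : PC K n) :
    Yq K n i g = dq K n i g - pV K n i * dt K n g := rfl

lemma dtYp (i : Fin n) (g : PC K n) :
    dt K n (Yp K n i g) = Yp K n i (dt K n g) := by
  simp only [Yp_app, dp, dq, dt, pV, qV, map_add, pderiv_mul, dX1, dX2]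
  linear_combination my_pderiv_comm K (Sum.inr (Sum.inr ()) : CIdx n) (Sum.inl i) g

lemma dtYq (i : Fin n) (g : PC K n) :
    dt K n (Yq K n i g) = Yq K n i (dt K n g) := by
  simp only [Yq_app, dp, dq, dt, pV, qV, map_sub, pderiv_mul, dX1, dX2]
  linear_combination my_pderiv_comm K (Sum.inr (Sum.inr ()) : CIdx n) (Sum.inr (Sum.inl i)) g

lemma comm2 (i : Fin n) (g : PC K n) :
    Yq K n i (Yp K n i g) = Yp K n i (Yq K n i g) + 2 * dt K n g := by
  simp only [Yq_app, Yp_app, dp, dq, dt, pV, qV, map_add, map_sub, pderiv_mul,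
    pderiv_X_self, dX1, dX2, dX3, dX4, dX5, dX6]
  linear_combination my_pderiv_comm K (Sum.inr (Sum.inl i) : CIdx n) (Sum.inl i) g
    + X (Sum.inr (Sum.inl i) : CIdx n) *
        my_pderiv_comm K (Sum.inr (Sum.inl i) : CIdx n) (Sum.inr (Sum.inr ())) g
    - X (Sum.inl i : CIdx n) *
        my_pderiv_comm K (Sum.inr (Sum.inr ()) : CIdx n) (Sum.inl i) g

lemma expand_pp (i j : Fin n) (g : PC K n) :
    Yp K n i (Yp K n j g) = dp K n i (dp K n j g)
      + qV K n j * dp K n i (dt K n g) + qV K n i * dp K n j (dt K n g)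
      + qV K n i * qV K n j * dt K n (dt K n g) := by
  simp only [Yp_app, dp, dq, dt, pV, qV, map_add, pderiv_mul,
    pderiv_X_self, dX1, dX2, dX3, dX4, dX5, dX6]
  linear_combination X (Sum.inr (Sum.inl i) : CIdx n) *
    my_pderiv_comm K (Sum.inr (Sum.inr ()) : CIdx n) (Sum.inl j) g

lemma expand_qq (i j : Fin n) (g : PC K n) :
    Yq K n i (Yq K n j g) = dq K n i (dq K n j g)
      - pV K n j * dq K n i (dt K n g) - pV K n i * dq K n j (dt K n g)
      + pV K n i * pV K n j * dt K n (dt K n g) := by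
  simp only [Yq_app, dp, dq, dt, pV, qV, map_sub, pderiv_mul,
    pderiv_X_self, dX1, dX2, dX3, dX4, dX5, dX6]
  linear_combination (- X (Sum.inl i : CIdx n)) *
    my_pderiv_comm K (Sum.inr (Sum.inr ()) : CIdx n) (Sum.inr (Sum.inl j)) g

lemma expand_pq (i j : Fin n) (hij : i ≠ j) (g : PC K n) :
    Yp K n i (Yq K n j g) = dp K n i (dq K n j g)
      - pV K n j * dp K n i (dt K n g) + qV K n i * dq K n j (dt K n g)
      - qV K n i * pV K n j * dt K n (dt K n g) := by
  simp only [Yq_app, Yp_app, dp, dq, dt, pV, qV, map_add, map_sub, pderiv_mul,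
    pderiv_X_self, dX1, dX2, dX3, dX4, dX5, dX6, dX7 K n i j hij]
  linear_combination X (Sum.inr (Sum.inl i) : CIdx n) *
    my_pderiv_comm K (Sum.inr (Sum.inr ()) : CIdx n) (Sum.inr (Sum.inl j)) g

lemma expand_pq_self (i : Fin n) (g : PC K n) :
    Yp K n i (Yq K n i g) = dp K n i (dq K n i g) - dt K n g
      - pV K n i * dp K n i (dt K n g) + qV K n i * dq K n i (dt K n g)
      - qV K n i * pV K n i * dt K n (dt K n g) := by
  simp only [Yq_app, Yp_app, dp, dq, dt, pV, qV, map_add, map_sub, pderiv_mul,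
    pderiv_X_self, dX1, dX2, dX3, dX4, dX5, dX6]
  linear_combination X (Sum.inr (Sum.inl i) : CIdx n) *
    my_pderiv_comm K (Sum.inr (Sum.inr ()) : CIdx n) (Sum.inr (Sum.inl i)) g

/-- if `f` is annihilated by all second-order operators
`Y_{pᵢ}Y_{pⱼ}`, `Y_{qᵢ}Y_{qⱼ}`, `Y_{pᵢ}Y_{qⱼ}` (`i ≠ j`) and
`Y_{pᵢ}Y_{qᵢ} + Y_{qᵢ}Y_{pᵢ}`, then `f` lies in the span of
`{1, p₁,…,pₙ, q₁,…,qₙ, t}`; consequently the partial prolong of the negative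
part of the contact algebra together with `K·K_t` adds no new positive
components. -/
theorem prolong_of_center_is_trivial (hn : 1 ≤ n) (f : PC K n)
    (hpp : ∀ i j : Fin n, Yp K n i (Yp K n j f) = 0)
    (hqq : ∀ i j : Fin n, Yq K n i (Yq K n j f) = 0)
    (hpq : ∀ i j : Fin n, i ≠ j → Yp K n i (Yq K n j f) = 0)
    (hmix : ∀ i : Fin n, Yp K n i (Yq K n i f) + Yq K n i (Yp K n i f) = 0) :
    f ∈ Submodule.span K
      ({1, tV K n} ∪ Set.range (pV K n) ∪ Set.range (qV K n)) := by
  -- basic consequences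
  have two_ne : ((2:ℕ) : K) ≠ 0 := by norm_num
  have three_ne : ((3:ℕ) : K) ≠ 0 := by norm_num
  have F1a : ∀ i : Fin n, Yq K n i (Yp K n i f) = dt K n f := by
    intro i
    have h2 := comm2 K n i f
    have h := cancel_nat K n 2 two_ne (Yq K n i (Yp K n i f) - dt K n f)
      (by push_cast; linear_combination h2 + hmix i)
    linear_combination h
  have F1b : ∀ i : Fin n, Yp K n i (Yq K n i f) = - dt K n f := by
    intro i
    linear_combination hmix i - F1a i
  have F2 : ∀ i : Fin n, dt K n (Yp K n i f) = 0 := by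
    intro i
    have h0 : Yq K n i (Yp K n i (Yp K n i f)) = 0 := by rw [hpp i i, map_zero]
    have h1 := comm2 K n i (Yp K n i f)
    have h2 : Yp K n i (Yq K n i (Yp K n i f)) = Yp K n i (dt K n f) := by rw [F1a i]
    have h3 := dtYp K n i f
    exact cancel_nat K n 3 three_ne _ (by push_cast; linear_combination -h1 + h0 - h2 + h3)
  have F3 : ∀ i : Fin n, dt K n (Yq K n i f) = 0 := by
    intro i
    have h0 : Yp K n i (Yq K n i (Yq K n i f)) = 0 := by rw [hqq i i, map_zero]
    have h1 := comm2 K n i (Yq K n i f)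
    have h2 : Yq K n i (Yp K n i (Yq K n i f)) = - dt K n (Yq K n i f) := by
      rw [F1b i, map_neg, ← dtYq]
    exact cancel_nat K n 3 three_ne _ (by push_cast; linear_combination -h1 - h0 + h2)
  have i0 : Fin n := ⟨0, hn⟩
  have F4 : dt K n (dt K n f) = 0 := by
    rw [← F1a i0, dtYq, F2 i0, map_zero]
  have F5 : ∀ j : Fin n, dp K n j (dt K n f) = 0 := by
    intro j
    have h := (dtYp K n j f).symm.trans (F2 j)
    rw [Yp_app, F4, mul_zero, add_zero] at h
    exact h
  have F6 : ∀ j : Fin n, dq K n j (dt K n f) = 0 := by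
    intro j
    have h := (dtYq K n j f).symm.trans (F3 j)
    rw [Yq_app, F4, mul_zero, sub_zero] at h
    exact h
  have G1 : ∀ i j : Fin n, dp K n i (dp K n j f) = 0 := by
    intro i j
    have h := hpp i j
    rw [expand_pp, F5 i, F5 j, F4] at h
    linear_combination h
  have G2 : ∀ i j : Fin n, dq K n i (dq K n j f) = 0 := by
    intro i j
    have h := hqq i j
    rw [expand_qq, F6 i, F6 j, F4] at h
    linear_combination h
  have G5 : ∀ i j : Fin n, dp K n i (dq K n j f) = 0 := by
    intro i j
    rcases eq_or_ne i j with rfl | hij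
    · have h := F1b i
      rw [expand_pq_self, F5 i, F6 i, F4] at h
      linear_combination h
    · have h := hpq i j hij
      rw [expand_pq K n i j hij, F5 i, F6 j, F4] at h
      linear_combination h
  have allSecond : ∀ a b : CIdx n, pderiv a (pderiv b f) = 0 := by
    rintro (i | i | u) (j | j | v)
    · exact G1 i j
    · exact G5 i j
    · exact F5 i
    · rw [my_pderiv_comm]; exact G5 j i
    · exact G2 i j
    · exact F6 i
    · rw [my_pderiv_comm]; exact F5 j
    · rw [my_pderiv_comm]; exact F6 j
    · exact F4
  have hmem := mem_span_of_second_pderiv K f allSecond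
  refine Submodule.span_mono ?_ hmem
  rintro x (rfl | ⟨a, rfl⟩)
  · exact Or.inl (Or.inl (Or.inl rfl))
  · rcases a with i | i | u
    · exact Or.inl (Or.inr ⟨i, rfl⟩)
    · exact Or.inr ⟨i, rfl⟩
    · exact Or.inl (Or.inl (Or.inr rfl))

end
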